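/- For every θ ∈ (0, π/2) and every ν ∈ ℝ, the circle with equation x² + y² + B(ν)·y + H(ν) = 0, where B(ν) = −2 + 4(ν−1)tanθ and H(ν) = 1 + 4(1−ν)tanθ + 4(1−ν)tan²θ (a member of the hyperbolic pencil with loci i and i(1+2tanθ)), is orthogonal to the circle of radius r(θ) centred at ζ(θ): explicitly, |ζ(θ) + i·B(ν)/2|² = r(θ)² + (B(ν)²/4 − H(ν)). -/

import Mathlib

open Complex

/-- For every θ ∈ (0, π/2) and every ν ∈ ℝ, the circle
x² + y² + B(ν)·y + H(ν) = 0, with B(ν) = −2 + 4(ν−1)tanθ and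
H(ν) = 1 + 4(1−ν)tanθ + 4(1−ν)tan²θ (a member of the hyperbolic pencil with loci i and
i(1+2tanθ)), is orthogonal to the circle of radius r(θ) centred at ζ(θ): explicitly,
|ζ(θ) + i·B(ν)/2|² = r(θ)² + (B(ν)²/4 − H(ν)). -/
theorem stmt17 (θ ν : ℝ) (hθ : θ ∈ Set.Ioo 0 (Real.pi / 2)) :
    let t : ℝ := Real.tan θ
    let B : ℝ := -2 + 4 * (ν - 1) * t
    let H : ℝ := 1 + 4 * (1 - ν) * t + 4 * (1 - ν) * t ^ 2
    let r : ℝ := t / Real.sin (2 * θ)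
    let ζ : ℂ := (↑(-(t * Real.cos (2 * θ) / Real.sin (2 * θ))) : ℂ) + (↑(1 + t) : ℂ) * I
    ‖ζ + I * (↑(B / 2) : ℂ)‖ ^ 2 = r ^ 2 + (B ^ 2 / 4 - H) := by
  intro t B H r ζ
  have hc : Real.cos θ > 0 := Real.cos_pos_of_mem_Ioo ⟨by linarith [hθ.1, Real.pi_pos], hθ.2⟩
  have hs : Real.sin θ > 0 := Real.sin_pos_of_pos_of_lt_pi hθ.1 (by linarith [hθ.2, Real.pi_pos])
  have hpy : Real.sin θ ^ 2 + Real.cos θ ^ 2 = 1 := Real.sin_sq_add_cos_sq θ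
  have hsne : Real.sin θ ≠ 0 := ne_of_gt hs
  have hcne : Real.cos θ ≠ 0 := ne_of_gt hc
  have hr : t / Real.sin (2 * θ) = (1 + t ^ 2) / 2 := by
    show Real.tan θ / Real.sin (2 * θ) = (1 + Real.tan θ ^ 2) / 2
    rw [Real.sin_two_mul, Real.tan_eq_sin_div_cos]
    field_simp
    linarith [hpy]
  have hx : t * Real.cos (2 * θ) / Real.sin (2 * θ) = 1 - (1 + t ^ 2) / 2 := by
    show Real.tan θ * Real.cos (2 * θ) / Real.sin (2 * θ) = 1 - (1 + Real.tan θ ^ 2) / 2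
    rw [Real.sin_two_mul, Real.cos_two_mul, Real.tan_eq_sin_div_cos]
    field_simp
    nlinarith [hpy, sq_nonneg (Real.sin θ)]
  rw [Complex.sq_norm, Complex.normSq_apply]
  simp only [ζ, Complex.add_re, Complex.add_im, Complex.ofReal_re, Complex.ofReal_im,
    Complex.mul_re, Complex.mul_im, Complex.I_re, Complex.I_im]
  simp only [B, H, r, hr, hx]
  ring
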